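/- Let S be a finite subset of [0,1] with |S| = n+1, containing 0 and 1, such that whenever t, u ∈ S and t ≤ u, u − t ∈ S. Then S = {0, 1/n, 2/n, ..., 1}, i.e., S = {i/n : 0 ≤ i ≤ n}. -/

import Mathlib

/-- a finite subset of `[0,1]` with `n+1` elements, containing `0`
and `1` and closed under differences of comparable elements, equals
`{i/n : 0 ≤ i ≤ n}`. -/
theorem stmt2 (S : Set ℝ) (n : ℕ) (hn : 1 ≤ n) (hcard : S.ncard = n + 1)
    (hsub : S ⊆ Set.Icc 0 1) (h0 : (0 : ℝ) ∈ S) (h1 : (1 : ℝ) ∈ S)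
    (hdiff : ∀ t ∈ S, ∀ u ∈ S, t ≤ u → u - t ∈ S) :
    S = {x : ℝ | ∃ i ≤ n, x = (i : ℝ) / n} := by
  have hfin : S.Finite := Set.finite_of_ncard_ne_zero (by omega)
  -- minimal positive element a
  set T : Set ℝ := S \ {0} with hTdef
  have hTfin : T.Finite := hfin.diff
  have hTne : T.Nonempty := ⟨1, h1, by norm_num⟩
  have hne' : hTfin.toFinset.Nonempty := by
    rwa [Set.Finite.toFinset_nonempty]
  set a : ℝ := hTfin.toFinset.min' hne' with ha
  have haT : a ∈ T := by
    have := hTfin.toFinset.min'_mem hne'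
    rwa [Set.Finite.mem_toFinset] at this
  have hamin : ∀ b ∈ T, a ≤ b := by
    intro b hb
    exact hTfin.toFinset.min'_le b (by rwa [Set.Finite.mem_toFinset])
  have haS : a ∈ S := haT.1
  have hapos : 0 < a := by
    have := (hsub haS).1
    have hne : a ≠ 0 := haT.2
    exact lt_of_le_of_ne this (Ne.symm hne)
  -- every element of S is a natural multiple of a
  have hmulN : ∀ N : ℕ, ∀ x ∈ S, x ≤ N * a → ∃ k : ℕ, x = k * a := by
    intro N
    induction N with
    | zero =>
      intro x hx hxle
      have : x = 0 := le_antisymm (by simpa using hxle) (hsub hx).1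
      exact ⟨0, by simp [this]⟩
    | succ N ih =>
      intro x hx hle
      by_cases hx0 : x = 0
      · exact ⟨0, by simp [hx0]⟩
      · have hax : a ≤ x := hamin x ⟨hx, hx0⟩
        have hxS : x - a ∈ S := hdiff a haS x hx hax
        have hle' : x - a ≤ N * a := by push_cast at hle ⊢; linarith
        obtain ⟨k, hk⟩ := ih (x - a) hxS hle'
        exact ⟨k + 1, by push_cast; linarith⟩
  have hmul : ∀ x ∈ S, ∃ k : ℕ, x = k * a := by
    intro x hx
    refine hmulN ⌈1 / a⌉₊ x hx ?_
    have h1le : 1 / a ≤ (⌈1 / a⌉₊ : ℝ) := Nat.le_ceil _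
    have : 1 ≤ (⌈1 / a⌉₊ : ℝ) * a := (div_le_iff₀ hapos).mp h1le
    linarith [(hsub hx).2]
  -- 1 = m * a
  obtain ⟨m, hm⟩ := hmul 1 h1
  have hmpos : 1 ≤ m := by
    rcases Nat.eq_zero_or_pos m with h | h
    · exfalso; rw [h] at hm; norm_num at hm
    · exact h
  -- all multiples k*a for k ≤ m are in S
  have hdown : ∀ k : ℕ, k ≤ m → 1 - k * a ∈ S := by
    intro k
    induction k with
    | zero => intro _; simpa using h1
    | succ k ih =>
      intro hk
      have hkS : 1 - k * a ∈ S := ih (by omega)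
      have hcast : ((k : ℝ) + 1) * a ≤ m * a := by
        have : ((k : ℝ) + 1) ≤ m := by exact_mod_cast hk
        exact mul_le_mul_of_nonneg_right this hapos.le
      have hle : a ≤ 1 - k * a := by rw [hm]; nlinarith
      have := hdiff a haS (1 - k * a) hkS hle
      have heq : 1 - k * a - a = 1 - (↑(k + 1)) * a := by push_cast; ring
      rwa [heq] at this
  have hup : ∀ j : ℕ, j ≤ m → (j : ℝ) * a ∈ S := by
    intro j hj
    have := hdown (m - j) (by omega)
    have heq : 1 - (↑(m - j) : ℝ) * a = j * a := by
      rw [Nat.cast_sub hj, hm]; ring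
    rwa [heq] at this
  -- S as a finite image
  have hSeq : S = ↑((Finset.range (m + 1)).image (fun k : ℕ => (k : ℝ) * a)) := by
    ext x
    simp only [Finset.coe_image, Finset.coe_range, Set.mem_image, Set.mem_Iio]
    constructor
    · intro hx
      obtain ⟨k, hk⟩ := hmul x hx
      refine ⟨k, ?_, hk.symm⟩
      have hxle : x ≤ 1 := (hsub hx).2
      rw [hk, hm] at hxle
      have : (k : ℝ) ≤ m := le_of_mul_le_mul_right hxle hapos
      have : k ≤ m := by exact_mod_cast this
      omega
    · rintro ⟨k, hk, rfl⟩
      exact hup k (by omega)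
  have hinj : Set.InjOn (fun k : ℕ => (k : ℝ) * a) ↑(Finset.range (m + 1)) := by
    intro x _ y _ hxy
    have : (x : ℝ) = y := by
      field_simp at hxy
      exact_mod_cast hxy
    exact_mod_cast this
  have hcard2 : S.ncard = m + 1 := by
    rw [hSeq, Set.ncard_coe_finset, Finset.card_image_of_injOn hinj,
      Finset.card_range]
  have hmn : m = n := by omega
  subst hmn
  have han : a = 1 / m := by
    field_simp
    linarith [hm]
  -- conclude
  rw [hSeq]
  ext x
  simp only [Finset.coe_image, Finset.coe_range, Set.mem_image, Set.mem_Iio,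
    Set.mem_setOf_eq]
  constructor
  · rintro ⟨k, hk, rfl⟩
    exact ⟨k, by omega, by rw [han]; ring⟩
  · rintro ⟨i, hi, rfl⟩
    exact ⟨i, by omega, by rw [han]; ring⟩
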